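/- arXiv:2501.11135 — 3 statements merged into one kernel-verified Lean document; each statement's English description precedes it below -/
import Mathlib

section
/- Let d ∈ ℕ, let L : ℝ^d → ℝ be differentiable, let λ > 0 and γ > 0. Let m̄ ∈ {0,1}^d be a binary vector with support S = {i : m̄_i = 1} of cardinality k, and suppose ‖∇L(m̄)‖_∞ ≤ λ. Let m* ∈ [0,1]^d be a global minimizer over [0,1]^d of m ↦ L(m) + λ‖m‖₁, i.e. L(m*) + λ‖m*‖₁ ≤ L(m) + λ‖m‖₁ for all m ∈ [0,1]^d. Assume the strong-convexity inequality L(m*) ≥ L(m̄) + ∇L(m̄)ᵀ(m* − m̄) + (γ/2)‖m* − m̄‖₂². Then ‖m* − m̄‖₂ ≤ 4λ√k/γ. -/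
/-- Theorem 1 of the paper: error bound for the ℓ1-regularized relaxed mask estimate.
Vectors live in `EuclideanSpace ℝ (Fin d)`, so `‖·‖` is the Euclidean (ℓ2) norm;
the ℓ1 norm is written as `∑ i, |· i|`, the ℓ∞ bound on the gradient coordinatewise. -/
theorem l1_mask_error_bound
    (d : ℕ) (L : EuclideanSpace ℝ (Fin d) → ℝ) (hL : Differentiable ℝ L)
    (lam γ : ℝ) (hlam : 0 < lam) (hγ : 0 < γ)
    (mbar : EuclideanSpace ℝ (Fin d)) (hbin : ∀ i, mbar i = 0 ∨ mbar i = 1)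
    (k : ℕ) (hk : (Finset.univ.filter fun i => mbar i = 1).card = k)
    (hgrad : ∀ i, |gradient L mbar i| ≤ lam)
    (mstar : EuclideanSpace ℝ (Fin d)) (hms : ∀ i, mstar i ∈ Set.Icc (0 : ℝ) 1)
    (hmin : ∀ m : EuclideanSpace ℝ (Fin d), (∀ i, m i ∈ Set.Icc (0 : ℝ) 1) →
      L mstar + lam * ∑ i, |mstar i| ≤ L m + lam * ∑ i, |m i|)
    (hsc : L mstar ≥ L mbar + (inner ℝ (gradient L mbar) (mstar - mbar) : ℝ)
      + γ / 2 * ‖mstar - mbar‖ ^ 2) :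
    ‖mstar - mbar‖ ≤ 4 * lam * Real.sqrt k / γ := by
  set g := gradient L mbar with hg
  set Δ : EuclideanSpace ℝ (Fin d) := mstar - mbar with hΔ
  set S : Finset (Fin d) := Finset.univ.filter fun i => mbar i = 1 with hS
  have hΔi : ∀ i, Δ i = mstar i - mbar i := fun i => rfl
  -- optimality at mbar
  have h1 : L mstar + lam * ∑ i, |mstar i| ≤ L mbar + lam * ∑ i, |mbar i| :=
    hmin mbar (fun i => by rcases hbin i with h | h <;> simp [h])
  -- inner product as a sum
  have hinner : (inner ℝ g Δ : ℝ) = ∑ i, g i * Δ i := by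
    simp [PiLp.inner_apply, RCLike.inner_apply, mul_comm]
  -- basic inequality
  have h2 : γ / 2 * ‖Δ‖ ^ 2 ≤ ∑ i, (lam * |Δ i| + lam * (|mbar i| - |mstar i|)) := by
    have hgΔ : -(inner ℝ g Δ : ℝ) ≤ ∑ i, lam * |Δ i| := by
      rw [hinner, ← Finset.sum_neg_distrib]
      apply Finset.sum_le_sum
      intro i _
      calc -(g i * Δ i) ≤ |g i * Δ i| := neg_le_abs _
        _ = |g i| * |Δ i| := abs_mul _ _
        _ ≤ lam * |Δ i| := by
            apply mul_le_mul_of_nonneg_right (hgrad i) (abs_nonneg _)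
    have : γ / 2 * ‖Δ‖ ^ 2 ≤ -(inner ℝ g Δ : ℝ) + lam * (∑ i, |mbar i| - ∑ i, |mstar i|) := by
      nlinarith [hsc, h1]
    calc γ / 2 * ‖Δ‖ ^ 2
        ≤ -(inner ℝ g Δ : ℝ) + lam * (∑ i, |mbar i| - ∑ i, |mstar i|) := this
      _ ≤ (∑ i, lam * |Δ i|) + lam * (∑ i, |mbar i| - ∑ i, |mstar i|) := by linarith
      _ = ∑ i, (lam * |Δ i| + lam * (|mbar i| - |mstar i|)) := by
          rw [Finset.sum_add_distrib, ← Finset.sum_sub_distrib, Finset.mul_sum]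
  -- coordinatewise identification of the RHS
  have h3 : ∀ i, lam * |Δ i| + lam * (|mbar i| - |mstar i|)
      = if mbar i = 1 then 2 * lam * |Δ i| else 0 := by
    intro i
    obtain ⟨h0, h1'⟩ := hms i
    rcases hbin i with h | h
    · have hd : Δ i = mstar i := by rw [hΔi, h, sub_zero]
      rw [if_neg (by rw [h]; norm_num), hd, h, abs_of_nonneg h0]
      simp
    · have hd : Δ i = mstar i - 1 := by rw [hΔi, h]
      rw [if_pos h, hd, h, abs_of_nonpos (by linarith), abs_of_nonneg h0, abs_one]
      ring
  have h4 : γ / 2 * ‖Δ‖ ^ 2 ≤ 2 * lam * ∑ i ∈ S, |Δ i| := by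
    calc γ / 2 * ‖Δ‖ ^ 2 ≤ ∑ i, (lam * |Δ i| + lam * (|mbar i| - |mstar i|)) := h2
      _ = ∑ i, (if mbar i = 1 then 2 * lam * |Δ i| else 0) := by
          exact Finset.sum_congr rfl fun i _ => h3 i
      _ = ∑ i ∈ S, 2 * lam * |Δ i| := by rw [hS, Finset.sum_filter]
      _ = 2 * lam * ∑ i ∈ S, |Δ i| := by rw [Finset.mul_sum]
  -- Cauchy–Schwarz on S
  have hnorm : ‖Δ‖ ^ 2 = ∑ i, Δ i ^ 2 := by
    rw [PiLp.norm_sq_eq_of_L2]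
    exact Finset.sum_congr rfl fun i _ => by rw [Real.norm_eq_abs, sq_abs]
  have hcs : ∑ i ∈ S, |Δ i| ≤ Real.sqrt k * ‖Δ‖ := by
    have h5 : (∑ i ∈ S, |Δ i|) ^ 2 ≤ (S.card : ℝ) * ∑ i ∈ S, |Δ i| ^ 2 :=
      sq_sum_le_card_mul_sum_sq
    have h6 : ∑ i ∈ S, |Δ i| ^ 2 ≤ ‖Δ‖ ^ 2 := by
      rw [hnorm]
      simp_rw [sq_abs]
      exact Finset.sum_le_sum_of_subset_of_nonneg (Finset.subset_univ S)
        (fun i _ _ => sq_nonneg _)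
    have h7 : (∑ i ∈ S, |Δ i|) ^ 2 ≤ (Real.sqrt k * ‖Δ‖) ^ 2 := by
      rw [mul_pow, Real.sq_sqrt (Nat.cast_nonneg k)]
      calc (∑ i ∈ S, |Δ i|) ^ 2 ≤ (S.card : ℝ) * ∑ i ∈ S, |Δ i| ^ 2 := h5
        _ = (k : ℝ) * ∑ i ∈ S, |Δ i| ^ 2 := by rw [hS, hk]
        _ ≤ (k : ℝ) * ‖Δ‖ ^ 2 := by
            apply mul_le_mul_of_nonneg_left h6 (Nat.cast_nonneg k)
    have hs1 : 0 ≤ ∑ i ∈ S, |Δ i| := Finset.sum_nonneg fun i _ => abs_nonneg _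
    have hs2 : 0 ≤ Real.sqrt k * ‖Δ‖ :=
      mul_nonneg (Real.sqrt_nonneg _) (norm_nonneg _)
    nlinarith [h7, hs1, hs2]
  -- conclude
  have h8 : γ / 2 * ‖Δ‖ ^ 2 ≤ 2 * lam * (Real.sqrt k * ‖Δ‖) := by
    calc γ / 2 * ‖Δ‖ ^ 2 ≤ 2 * lam * ∑ i ∈ S, |Δ i| := h4
      _ ≤ 2 * lam * (Real.sqrt k * ‖Δ‖) := by
          apply mul_le_mul_of_nonneg_left hcs (by linarith)
  rcases eq_or_lt_of_le (norm_nonneg Δ) with h0 | h0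
  · rw [← h0]
    positivity
  · rw [le_div_iff₀ hγ]
    nlinarith [h8, Real.sqrt_nonneg (k:ℝ), h0]
end

section
/- Let d ∈ ℕ, let L : ℝ^d → ℝ be differentiable, λ > 0, γ > 0. Let m̄ ∈ {0,1}^d with support S and complement S^c, and suppose ‖∇L(m̄)‖_∞ ≤ λ. Let m* ∈ [0,1]^d satisfy L(m*) + λ‖m*‖₁ ≤ L(m) + λ‖m‖₁ for all m ∈ [0,1]^d, and assume L(m*) ≥ L(m̄) + ∇L(m̄)ᵀ(m* − m̄) + (γ/2)‖m* − m̄‖₂². Then, with h = m* − m̄ and h_S the vector agreeing with h on S and zero elsewhere, (γ/2)‖h‖₂² ≤ 2λ‖h_S‖₁. -/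
/-- Central intermediate inequality in the proof of Theorem 1 of the paper:
`(γ/2)‖h‖₂² ≤ 2λ‖h_S‖₁` with `h = m* − m̄` and `S = {i : m̄ i = 1}`. -/
theorem l1_central_inequality
    (d : ℕ) (L : EuclideanSpace ℝ (Fin d) → ℝ) (hL : Differentiable ℝ L)
    (lam γ : ℝ) (hlam : 0 < lam) (hγ : 0 < γ)
    (mbar : EuclideanSpace ℝ (Fin d)) (hbin : ∀ i, mbar i = 0 ∨ mbar i = 1)
    (hgrad : ∀ i, |gradient L mbar i| ≤ lam)
    (mstar : EuclideanSpace ℝ (Fin d)) (hms : ∀ i, mstar i ∈ Set.Icc (0 : ℝ) 1)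
    (hmin : ∀ m : EuclideanSpace ℝ (Fin d), (∀ i, m i ∈ Set.Icc (0 : ℝ) 1) →
      L mstar + lam * ∑ i, |mstar i| ≤ L m + lam * ∑ i, |m i|)
    (hsc : L mstar ≥ L mbar + (inner ℝ (gradient L mbar) (mstar - mbar) : ℝ)
      + γ / 2 * ‖mstar - mbar‖ ^ 2) :
    γ / 2 * ‖mstar - mbar‖ ^ 2 ≤
      2 * lam * ∑ i, |if mbar i = 1 then mstar i - mbar i else 0| := by
  set g := gradient L mbar with hg
  have hmem : ∀ i, mbar i ∈ Set.Icc (0:ℝ) 1 := by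
    intro i; rcases hbin i with h | h <;> simp [h]
  have key := hmin mbar hmem
  have hinner : (inner ℝ g (mstar - mbar) : ℝ) = ∑ i, g i * (mstar i - mbar i) := by
    rw [PiLp.inner_apply]
    refine Finset.sum_congr rfl fun i _ => ?_
    simp [RCLike.inner_apply, mul_comm]
  -- step 1
  have h1 : γ / 2 * ‖mstar - mbar‖ ^ 2 ≤
      lam * ∑ i, |mbar i| - lam * ∑ i, |mstar i| - ∑ i, g i * (mstar i - mbar i) := by
    rw [hinner] at hsc
    linarith
  -- step 2 : -∑ g h ≤ ∑ lam |h|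
  have h2 : -∑ i, g i * (mstar i - mbar i) ≤ ∑ i, lam * |mstar i - mbar i| := by
    rw [← Finset.sum_neg_distrib]
    refine Finset.sum_le_sum fun i _ => ?_
    calc -(g i * (mstar i - mbar i)) ≤ |g i * (mstar i - mbar i)| := neg_le_abs _
      _ = |g i| * |mstar i - mbar i| := abs_mul _ _
      _ ≤ lam * |mstar i - mbar i| := by
          exact mul_le_mul_of_nonneg_right (hgrad i) (abs_nonneg _)
  -- step 3 : identity
  have h3 : lam * ∑ i, |mbar i| - lam * ∑ i, |mstar i| + ∑ i, lam * |mstar i - mbar i|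
      = 2 * lam * ∑ i, |if mbar i = 1 then mstar i - mbar i else 0| := by
    rw [Finset.mul_sum, Finset.mul_sum, Finset.mul_sum, ← Finset.sum_sub_distrib,
      ← Finset.sum_add_distrib]
    refine Finset.sum_congr rfl fun i _ => ?_
    obtain ⟨h0, h1'⟩ := hms i
    rcases hbin i with h | h <;> rw [h]
    · simp [abs_of_nonneg h0]
    · rw [if_pos rfl, abs_one, abs_of_nonneg h0,
        abs_of_nonpos (by linarith : mstar i - 1 ≤ 0)]
      ring
  linarith
end

section
/- Let d ∈ ℕ, let L : ℝ^d → ℝ be differentiable, λ > 0, γ > 0. Let r : [0,1] → ℝ be concave with r(0) = 0 and r(1) = 1, and set R(m) = Σ_{i=1}^d r(m_i). Let m̄ ∈ {0,1}^d with support S of cardinality k, and suppose ‖∇L(m̄)‖_∞ ≤ λ. Let m* ∈ [0,1]^d satisfy L(m*) + λR(m*) ≤ L(m) + λR(m) for all m ∈ [0,1]^d, and assume L(m*) ≥ L(m̄) + ∇L(m̄)ᵀ(m* − m̄) + (γ/2)‖m* − m̄‖₂². Then, with h = m* − m̄ and φ(m*) = R(m*) − ‖m*‖₁, it holds that (γ/2)‖h‖₂²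 ≤ 2λ√k‖h‖₂ − λφ(m*). -/
/-- Quantitative content underlying Theorem 2 of the paper:
`(γ/2)‖h‖₂² ≤ 2λ√k‖h‖₂ − λφ(m*)` with `h = m* − m̄` and
`φ(m*) = R(m*) − ‖m*‖₁`. -/
theorem concave_central_inequality
    (d : ℕ) (L : EuclideanSpace ℝ (Fin d) → ℝ) (hL : Differentiable ℝ L)
    (lam γ : ℝ) (hlam : 0 < lam) (hγ : 0 < γ)
    (r : ℝ → ℝ) (hconc : ConcaveOn ℝ (Set.Icc (0 : ℝ) 1) r)
    (h0 : r 0 = 0) (h1 : r 1 = 1)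
    (mbar : EuclideanSpace ℝ (Fin d)) (hbin : ∀ i, mbar i = 0 ∨ mbar i = 1)
    (k : ℕ) (hk : (Finset.univ.filter fun i => mbar i = 1).card = k)
    (hgrad : ∀ i, |gradient L mbar i| ≤ lam)
    (mstar : EuclideanSpace ℝ (Fin d)) (hms : ∀ i, mstar i ∈ Set.Icc (0 : ℝ) 1)
    (hmin : ∀ m : EuclideanSpace ℝ (Fin d), (∀ i, m i ∈ Set.Icc (0 : ℝ) 1) →
      L mstar + lam * ∑ i, r (mstar i) ≤ L m + lam * ∑ i, r (m i))
    (hsc : L mstar ≥ L mbar + (inner ℝ (gradient L mbar) (mstar - mbar) : ℝ)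
      + γ / 2 * ‖mstar - mbar‖ ^ 2) :
    γ / 2 * ‖mstar - mbar‖ ^ 2 ≤
      2 * lam * Real.sqrt k * ‖mstar - mbar‖
      - lam * ((∑ i, r (mstar i)) - ∑ i, |mstar i|) := by
  classical
  set g : EuclideanSpace ℝ (Fin d) := gradient L mbar with hg
  set h : EuclideanSpace ℝ (Fin d) := mstar - mbar with hhdef
  have hcoord : ∀ i, h i = mstar i - mbar i := fun i => rfl
  set S : Finset (Fin d) := Finset.univ.filter (fun i => mbar i = 1) with hSdef
  -- mbar lies in the cube
  have hmbar01 : ∀ i, mbar i ∈ Set.Icc (0 : ℝ) 1 := by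
    intro i; rcases hbin i with e | e <;> simp [e]
  -- R(mbar) = k
  have hRbar : ∑ i, r (mbar i) = (k : ℝ) := by
    have heq : ∀ i ∈ Finset.univ, r (mbar i) = if mbar i = 1 then (1 : ℝ) else 0 := by
      intro i _
      rcases hbin i with e | e
      · have : mbar i ≠ 1 := by rw [e]; norm_num
        simp [e, h0, this]
      · simp [e, h1]
    rw [Finset.sum_congr rfl heq, Finset.sum_boole, ← hSdef, hk]
  -- norm of h as a sum
  have hsum_nonneg : (0 : ℝ) ≤ ∑ i, h i ^ 2 := Finset.sum_nonneg fun i _ => sq_nonneg _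
  have hnorm : ‖h‖ = Real.sqrt (∑ i, h i ^ 2) := by
    rw [EuclideanSpace.norm_eq]
    congr 1
    exact Finset.sum_congr rfl fun i _ => by rw [Real.norm_eq_abs, sq_abs]
  have hnormsq : ‖h‖ ^ 2 = ∑ i, h i ^ 2 := by
    rw [hnorm, Real.sq_sqrt hsum_nonneg]
  -- inner product as a sum
  have hinner : (inner ℝ g h : ℝ) = ∑ i, g i * h i := by
    rw [PiLp.inner_apply]
    exact Finset.sum_congr rfl fun i _ => by simp [RCLike.inner_apply, mul_comm]
  -- gradient bound : -(inner g h) ≤ lam * ∑ |h i|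
  have hib : -(∑ i, g i * h i) ≤ lam * ∑ i, |h i| := by
    rw [Finset.mul_sum, ← Finset.sum_neg_distrib]
    apply Finset.sum_le_sum
    intro i _
    have h1' : -(g i * h i) ≤ |g i| * |h i| := by
      rw [← abs_mul]
      exact neg_le_abs _
    exact h1'.trans (mul_le_mul_of_nonneg_right (hgrad i) (abs_nonneg _))
  -- minimizer bound
  have hmin' : L mstar - L mbar ≤ lam * ((k : ℝ) - ∑ i, r (mstar i)) := by
    have := hmin mbar hmbar01
    rw [hRbar] at this
    nlinarith
  -- key combinatorial identity
  have hkey : (k : ℝ) + (∑ i, |h i|) - (∑ i, |mstar i|) = 2 * ∑ i ∈ S, |h i| := by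
    have hL1 : (k : ℝ) + (∑ i, |h i|) - (∑ i, |mstar i|)
        = ∑ i, ((if mbar i = 1 then (1 : ℝ) else 0) + |h i| - |mstar i|) := by
      rw [Finset.sum_sub_distrib, Finset.sum_add_distrib, Finset.sum_boole, ← hSdef, hk]
    have hL2 : ∀ i ∈ Finset.univ,
        ((if mbar i = 1 then (1 : ℝ) else 0) + |h i| - |mstar i|)
        = (if mbar i = 1 then 2 * |h i| else 0) := by
      intro i _
      obtain ⟨hm0, hm1⟩ := hms i
      rcases hbin i with e | e
      · have hne : mbar i ≠ 1 := by rw [e]; norm_num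
        rw [if_neg hne, if_neg hne, hcoord i, e, sub_zero]
        ring
      · rw [if_pos e, if_pos e, hcoord i, e, abs_of_nonpos (by linarith),
          abs_of_nonneg hm0]
        ring
    rw [hL1, Finset.sum_congr rfl hL2, ← Finset.sum_filter, ← hSdef, Finset.mul_sum]
  -- Cauchy-Schwarz : ∑_{i ∈ S} |h i| ≤ √k * ‖h‖
  have hCS : (∑ i ∈ S, |h i|) ≤ Real.sqrt k * ‖h‖ := by
    have h1' : (∑ i ∈ S, |h i|) = ∑ i ∈ S, (1 : ℝ) * |h i| := by simp
    have h2' := Real.sum_mul_le_sqrt_mul_sqrt S (fun _ => (1 : ℝ)) (fun i => |h i|)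
    simp only [one_pow, one_mul] at h2'
    have h3' : Real.sqrt (∑ _i ∈ S, (1 : ℝ)) = Real.sqrt k := by
      rw [Finset.sum_const, nsmul_eq_mul, mul_one, ← hk]
    have h4' : Real.sqrt (∑ i ∈ S, |h i| ^ 2) ≤ ‖h‖ := by
      rw [hnorm]
      apply Real.sqrt_le_sqrt
      calc ∑ i ∈ S, |h i| ^ 2 = ∑ i ∈ S, h i ^ 2 :=
            Finset.sum_congr rfl fun i _ => sq_abs _
        _ ≤ ∑ i, h i ^ 2 :=
            Finset.sum_le_sum_of_subset_of_nonneg (Finset.subset_univ S)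
              (fun i _ _ => sq_nonneg _)
    calc (∑ i ∈ S, |h i|) ≤ Real.sqrt (∑ _i ∈ S, (1:ℝ)) * Real.sqrt (∑ i ∈ S, |h i| ^ 2) := h2'
      _ ≤ Real.sqrt k * ‖h‖ := by
          rw [h3']
          exact mul_le_mul_of_nonneg_left h4' (Real.sqrt_nonneg _)
  -- put everything together
  have hstep1 : γ / 2 * ‖h‖ ^ 2 ≤ L mstar - L mbar - (∑ i, g i * h i) := by
    rw [← hinner]; linarith [hsc]
  have hstep2 : γ / 2 * ‖h‖ ^ 2 ≤ lam * ((k : ℝ) - ∑ i, r (mstar i)) + lam * ∑ i, |h i| :=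
    hstep1.trans (by linarith)
  have hmul : lam * (∑ i ∈ S, |h i|) ≤ lam * (Real.sqrt k * ‖h‖) :=
    mul_le_mul_of_nonneg_left hCS hlam.le
  nlinarith [hstep2, hkey, hmul]
end
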